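/- For all reals x ≥ 0, y ≥ 0, all reals κ₁₃ ≥ 0, κ₂₃ ≥ 0, κ₂₁ ≥ 0, and every m ∈ ℕ, the double sequence (n₁, n₂) ↦ x^{n₁} · y^{n₂} / (Γ(1 + κ₁₃·m + n₁) · Γ(1 + κ₂₃·m + κ₂₁·n₁ + n₂)) is summable over ℕ × ℕ. (This is the everywhere-convergence of the normalization series of the (γ₁₃, γ₂)-deformed vector coherent states with dependent sums.) -/

import Mathlib

set_option maxHeartbeats 800000

open Nat

private lemma summable_cube_pow_div_factorial (x : ℝ) (hx : 0 ≤ x) :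
    Summable (fun n : ℕ => ((n : ℝ) + 1) ^ 3 * x ^ n / n !) := by
  refine Summable.of_nonneg_of_le (fun n => by positivity) (fun n => ?_)
    ((Real.summable_pow_div_factorial (8 * x)).mul_left 8)
  have h1 : ((n : ℝ) + 1) ≤ 2 ^ (n + 1) := by
    exact_mod_cast (Nat.lt_two_pow_self (n := n + 1)).le
  have h1' : ((n : ℝ) + 1) ^ 3 ≤ (2 ^ (n + 1) : ℝ) ^ 3 := by
    gcongr
  have h2 : ((2 : ℝ) ^ (n + 1)) ^ 3 = 8 ^ (n + 1) := by
    rw [← pow_mul, mul_comm, pow_mul]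
    norm_num
  calc ((n : ℝ) + 1) ^ 3 * x ^ n / n ! ≤ (8 : ℝ) ^ (n + 1) * x ^ n / n ! := by
        rw [← h2]; gcongr
      _ = 8 * ((8 * x) ^ n / n !) := by
        rw [pow_succ, mul_pow]; ring
  -- end

private lemma factorial_le_gamma_aux (a : ℝ) (ha : 0 ≤ a) (n : ℕ) :
    ((n + 1)! : ℝ) ≤ (1 + a + n) * Real.Gamma (1 + a + n) := by
  have hne : (1 : ℝ) + a + n ≠ 0 := by positivity
  have h2 : Real.Gamma (1 + a + n + 1) = (1 + a + n) * Real.Gamma (1 + a + n) :=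
    Real.Gamma_add_one hne
  have h3 : Real.Gamma (((n + 1 : ℕ) : ℝ) + 1) = ((n + 1)! : ℝ) :=
    Real.Gamma_nat_eq_factorial (n + 1)
  have hmono := Real.Gamma_strictMonoOn_Ici.monotoneOn
  have h4 : Real.Gamma (((n + 1 : ℕ) : ℝ) + 1) ≤ Real.Gamma (1 + a + n + 1) := by
    apply hmono
    · simp only [Set.mem_Ici]; push_cast; linarith
    · simp only [Set.mem_Ici]; push_cast; linarith
    · push_cast; linarith
  rw [h3, h2] at h4
  exact h4

private lemma one_div_gamma_le (a : ℝ) (ha : 0 ≤ a) (n : ℕ) :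
    1 / Real.Gamma (1 + a + n) ≤ (1 + a + n) / ((n + 1)! : ℝ) := by
  have hΓ : 0 < Real.Gamma (1 + a + n) := Real.Gamma_pos_of_pos (by positivity)
  have hfac : (0 : ℝ) < ((n + 1)! : ℝ) := by exact_mod_cast (n + 1).factorial_pos
  rw [div_le_div_iff₀ hΓ hfac]
  have := factorial_le_gamma_aux a ha n
  nlinarith

/-- Everywhere-convergence of the normalization series of the `(γ₁₃, γ₂)`-deformed
vector coherent states with dependent sums. -/
theorem norm_series_summable_gamma13_gamma2 (x y κ₁₃ κ₂₃ κ₂₁ : ℝ)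
    (hx : 0 ≤ x) (hy : 0 ≤ y)
    (h13 : 0 ≤ κ₁₃) (h23 : 0 ≤ κ₂₃) (h21 : 0 ≤ κ₂₁) (m : ℕ) :
    Summable fun p : ℕ × ℕ =>
      x ^ p.1 * y ^ p.2 /
        (Real.Gamma (1 + κ₁₃ * m + p.1) *
          Real.Gamma (1 + κ₂₃ * m + κ₂₁ * p.1 + p.2)) := by
  set C₁ : ℝ := 1 + κ₁₃ * m with hC₁
  set C₂ : ℝ := 1 + κ₂₃ * m + κ₂₁ with hC₂
  have hC₁0 : (0 : ℝ) ≤ C₁ := by positivity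
  have hC₂0 : (0 : ℝ) ≤ C₂ := by positivity
  have hf : Summable (fun n : ℕ => C₁ * C₂ * (((n : ℝ) + 1) ^ 3 * x ^ n / n !)) :=
    (summable_cube_pow_div_factorial x hx).mul_left _
  have hg : Summable (fun n : ℕ => ((n : ℝ) + 1) ^ 3 * y ^ n / n !) :=
    summable_cube_pow_div_factorial y hy
  have hprod : Summable (fun p : ℕ × ℕ =>
      (C₁ * C₂ * (((p.1 : ℝ) + 1) ^ 3 * x ^ p.1 / p.1 !)) *
        (((p.2 : ℝ) + 1) ^ 3 * y ^ p.2 / p.2 !)) :=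
    hf.mul_of_nonneg hg (fun n => by positivity) (fun n => by positivity)
  refine Summable.of_nonneg_of_le (fun p => ?_) (fun p => ?_) hprod
  · have h1 : 0 < Real.Gamma (1 + κ₁₃ * m + p.1) := Real.Gamma_pos_of_pos (by positivity)
    have h2 : 0 < Real.Gamma (1 + κ₂₃ * m + κ₂₁ * p.1 + p.2) :=
      Real.Gamma_pos_of_pos (by positivity)
    positivity
  · obtain ⟨n₁, n₂⟩ := p
    simp only
    have h1 : 0 < Real.Gamma (1 + κ₁₃ * m + n₁) := Real.Gamma_pos_of_pos (by positivity)
    have h2 : 0 < Real.Gamma (1 + κ₂₃ * m + κ₂₁ * n₁ + n₂) :=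
      Real.Gamma_pos_of_pos (by positivity)
    have hb1 : 1 / Real.Gamma (1 + κ₁₃ * m + n₁) ≤ (1 + κ₁₃ * m + n₁) / ((n₁ + 1)! : ℝ) :=
      one_div_gamma_le (κ₁₃ * m) (by positivity) n₁
    have hb2 : 1 / Real.Gamma (1 + κ₂₃ * m + κ₂₁ * n₁ + n₂) ≤
        (1 + (κ₂₃ * m + κ₂₁ * n₁) + n₂) / ((n₂ + 1)! : ℝ) := by
      have := one_div_gamma_le (κ₂₃ * m + κ₂₁ * n₁) (by positivity) n₂
      convert this using 3 <;> ring
    have key : x ^ n₁ * y ^ n₂ /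
        (Real.Gamma (1 + κ₁₃ * m + n₁) * Real.Gamma (1 + κ₂₃ * m + κ₂₁ * n₁ + n₂)) =
        (x ^ n₁ * (1 / Real.Gamma (1 + κ₁₃ * m + n₁))) *
          (y ^ n₂ * (1 / Real.Gamma (1 + κ₂₃ * m + κ₂₁ * n₁ + n₂))) := by
      field_simp
    rw [key]
    have step1 : (x ^ n₁ * (1 / Real.Gamma (1 + κ₁₃ * m + n₁))) *
          (y ^ n₂ * (1 / Real.Gamma (1 + κ₂₃ * m + κ₂₁ * n₁ + n₂))) ≤
        (x ^ n₁ * ((1 + κ₁₃ * m + n₁) / ((n₁ + 1)! : ℝ))) *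
          (y ^ n₂ * ((1 + (κ₂₃ * m + κ₂₁ * n₁) + n₂) / ((n₂ + 1)! : ℝ))) := by
      apply mul_le_mul
      · exact mul_le_mul_of_nonneg_left hb1 (by positivity)
      · exact mul_le_mul_of_nonneg_left hb2 (by positivity)
      · positivity
      · positivity
    refine step1.trans ?_
    have e1 : (1 : ℝ) + κ₁₃ * m + n₁ ≤ C₁ * ((n₁ : ℝ) + 1) := by
      rw [hC₁]
      have hh : 0 ≤ κ₁₃ * (m : ℝ) * (n₁ : ℝ) :=
        mul_nonneg (mul_nonneg h13 (Nat.cast_nonneg m)) (Nat.cast_nonneg n₁)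
      nlinarith [Nat.cast_nonneg (α := ℝ) n₁]
    have e2 : (1 : ℝ) + (κ₂₃ * m + κ₂₁ * n₁) + n₂ ≤ (C₂ * ((n₁ : ℝ) + 1)) * ((n₂ : ℝ) + 1) := by
      rw [hC₂]
      have k1 : 0 ≤ κ₂₃ * (m : ℝ) := mul_nonneg h23 (Nat.cast_nonneg m)
      have k2 : 0 ≤ κ₂₁ * (n₁ : ℝ) := mul_nonneg h21 (Nat.cast_nonneg n₁)
      have k3 : 0 ≤ κ₂₃ * (m : ℝ) * (n₂ : ℝ) := mul_nonneg k1 (Nat.cast_nonneg n₂)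
      have k4 : 0 ≤ κ₂₁ * (n₁ : ℝ) * (n₂ : ℝ) := mul_nonneg k2 (Nat.cast_nonneg n₂)
      have k5 : 0 ≤ κ₂₁ * (n₂ : ℝ) := mul_nonneg h21 (Nat.cast_nonneg n₂)
      have k6 : 0 ≤ (n₁ : ℝ) * (n₂ : ℝ) := mul_nonneg (Nat.cast_nonneg n₁) (Nat.cast_nonneg n₂)
      have k7 : 0 ≤ κ₂₃ * (m : ℝ) * (n₁ : ℝ) := mul_nonneg k1 (Nat.cast_nonneg n₁)
      nlinarith [Nat.cast_nonneg (α := ℝ) n₁, Nat.cast_nonneg (α := ℝ) n₂]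
    have fac1 : ((n₁ + 1)! : ℝ) = ((n₁ : ℝ) + 1) * (n₁ ! : ℝ) := by
      rw [Nat.factorial_succ]; push_cast; ring
    have fac2 : ((n₂ + 1)! : ℝ) = ((n₂ : ℝ) + 1) * (n₂ ! : ℝ) := by
      rw [Nat.factorial_succ]; push_cast; ring
    have hfac1 : (0 : ℝ) < (n₁ ! : ℝ) := by exact_mod_cast n₁.factorial_pos
    have hfac2 : (0 : ℝ) < (n₂ ! : ℝ) := by exact_mod_cast n₂.factorial_pos
    have hn₁ : (0 : ℝ) < (n₁ : ℝ) + 1 := by positivity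
    have hn₂ : (0 : ℝ) < (n₂ : ℝ) + 1 := by positivity
    -- bound each factor
    have b1 : x ^ n₁ * ((1 + κ₁₃ * m + n₁) / ((n₁ + 1)! : ℝ)) ≤
        C₁ * (((n₁ : ℝ) + 1) ^ 2 * x ^ n₁ / n₁ !) := by
      have h : (1 + κ₁₃ * m + (n₁ : ℝ)) / ((n₁ + 1)! : ℝ) ≤ C₁ * ((n₁ : ℝ) + 1) ^ 2 / n₁ ! := by
        rw [fac1, div_le_div_iff₀ (by positivity) hfac1]
        have e1' := mul_le_mul_of_nonneg_right e1 hfac1.le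
        have hA : (0 : ℝ) ≤ C₁ * ((n₁ : ℝ) + 1) * (n₁ ! : ℝ) := by positivity
        have hB : (1 : ℝ) ≤ ((n₁ : ℝ) + 1) ^ 2 := by nlinarith [Nat.cast_nonneg (α := ℝ) n₁]
        nlinarith [mul_le_mul_of_nonneg_left hB hA]
      calc x ^ n₁ * ((1 + κ₁₃ * m + n₁) / ((n₁ + 1)! : ℝ))
          ≤ x ^ n₁ * (C₁ * ((n₁ : ℝ) + 1) ^ 2 / n₁ !) :=
            mul_le_mul_of_nonneg_left h (by positivity)
        _ = C₁ * (((n₁ : ℝ) + 1) ^ 2 * x ^ n₁ / n₁ !) := by ring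
    have b2 : y ^ n₂ * ((1 + (κ₂₃ * m + κ₂₁ * n₁) + n₂) / ((n₂ + 1)! : ℝ)) ≤
        (C₂ * ((n₁ : ℝ) + 1)) * (((n₂ : ℝ) + 1) ^ 3 * y ^ n₂ / n₂ !) := by
      have h : (1 + (κ₂₃ * m + κ₂₁ * n₁) + (n₂ : ℝ)) / ((n₂ + 1)! : ℝ) ≤
          C₂ * ((n₁ : ℝ) + 1) * ((n₂ : ℝ) + 1) ^ 3 / n₂ ! := by
        rw [fac2, div_le_div_iff₀ (by positivity) hfac2]
        have e2' := mul_le_mul_of_nonneg_right e2 hfac2.le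
        have hA : (0 : ℝ) ≤ C₂ * ((n₁ : ℝ) + 1) * ((n₂ : ℝ) + 1) * (n₂ ! : ℝ) := by positivity
        have hB : (1 : ℝ) ≤ ((n₂ : ℝ) + 1) ^ 3 := by
          nlinarith [pow_nonneg (Nat.cast_nonneg (α := ℝ) n₂) 3, sq_nonneg ((n₂ : ℝ)),
            Nat.cast_nonneg (α := ℝ) n₂]
        nlinarith [mul_le_mul_of_nonneg_left hB hA]
      calc y ^ n₂ * ((1 + (κ₂₃ * m + κ₂₁ * n₁) + n₂) / ((n₂ + 1)! : ℝ))
          ≤ y ^ n₂ * (C₂ * ((n₁ : ℝ) + 1) * ((n₂ : ℝ) + 1) ^ 3 / n₂ !) :=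
            mul_le_mul_of_nonneg_left h (by positivity)
        _ = (C₂ * ((n₁ : ℝ) + 1)) * (((n₂ : ℝ) + 1) ^ 3 * y ^ n₂ / n₂ !) := by ring
    calc (x ^ n₁ * ((1 + κ₁₃ * m + n₁) / ((n₁ + 1)! : ℝ))) *
          (y ^ n₂ * ((1 + (κ₂₃ * m + κ₂₁ * n₁) + n₂) / ((n₂ + 1)! : ℝ)))
        ≤ (C₁ * (((n₁ : ℝ) + 1) ^ 2 * x ^ n₁ / n₁ !)) *
            ((C₂ * ((n₁ : ℝ) + 1)) * (((n₂ : ℝ) + 1) ^ 3 * y ^ n₂ / n₂ !)) :=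
          mul_le_mul b1 b2 (by positivity) (by positivity)
      _ = (C₁ * C₂ * (((n₁ : ℝ) + 1) ^ 3 * x ^ n₁ / n₁ !)) *
            (((n₂ : ℝ) + 1) ^ 3 * y ^ n₂ / n₂ !) := by ring
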